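/- Let N be the diagonal (unbounded) operator on ℓ²(ℤ) with N(e_i) = |1+i| e_i, and let 𝒦 be the set of bounded operators a such that N^i a N^j extends to a bounded operator for all i, j ∈ ℕ. Define η_k(a) = ∑_{i+j=k} ‖N^i a N^j‖. Then η_k(ab) ≤ ∑_{i+j=k} η_i(a) η_j(b) for all a, b ∈ 𝒦, and consequently the norms ‖a‖_k = ∑_{0≤j≤k} η_j(a) are submultiplicative: ‖ab‖_k ≤ ‖a‖_k ‖b‖_k. -/

import Mathlib

/-- Let `N` be the diagonal operator on `ℓ²(ℤ)` with `N e_i = |1+i| e_i`, and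
let `𝒦` be the algebra of `a ∈ B(ℓ²(ℤ))` such that `N^i a N^j` extends to a
bounded operator for all `i, j`.  Abstractly: `K` is a subset of a normed
ring, and `T i a j` denotes the bounded extension of `N^i a N^j`; the key
algebraic identity is `N^i (ab) N^j = (N^i a)(b N^j)`, i.e.
`T i (ab) j = (T i a 0) * (T 0 b j)`.  Then, with
`η_k(a) = ∑_{i+j=k} ‖N^i a N^j‖`, one has
`η_k(ab) ≤ ∑_{i+j=k} η_i(a) η_j(b)`, and consequently the norms
`‖a‖_k = ∑_{j≤k} η_j(a)` are submultiplicative: `‖ab‖_k ≤ ‖a‖_k ‖b‖_k`. -/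
theorem differential_seminorm_submultiplicative
    {A : Type*} [NormedRing A] (K : Set A)
    (T : ℕ → A → ℕ → A)
    (hT0 : ∀ a ∈ K, T 0 a 0 = a)
    (hTmul : ∀ a ∈ K, ∀ b ∈ K, ∀ i j : ℕ, T i (a * b) j = T i a 0 * T 0 b j)
    (hKmul : ∀ a ∈ K, ∀ b ∈ K, a * b ∈ K) :
    let η : ℕ → A → ℝ := fun k a => ∑ p ∈ Finset.HasAntidiagonal.antidiagonal k, ‖T p.1 a p.2‖
    (∀ a ∈ K, ∀ b ∈ K, ∀ k : ℕ,
        η k (a * b) ≤ ∑ p ∈ Finset.HasAntidiagonal.antidiagonal k, η p.1 a * η p.2 b) ∧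
      (∀ a ∈ K, ∀ b ∈ K, ∀ k : ℕ,
        ∑ j ∈ Finset.range (k + 1), η j (a * b) ≤
          (∑ j ∈ Finset.range (k + 1), η j a) * (∑ j ∈ Finset.range (k + 1), η j b)) := by
  intro η
  have hηnn : ∀ (k : ℕ) (a : A), 0 ≤ η k a := fun k a =>
    Finset.sum_nonneg fun _ _ => norm_nonneg _
  have hleft : ∀ (a : A) (i : ℕ), ‖T i a 0‖ ≤ η i a := by
    intro a i
    exact Finset.single_le_sum (f := fun p : ℕ × ℕ => ‖T p.1 a p.2‖)
      (fun _ _ => norm_nonneg _)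
      (show ((i, 0) : ℕ × ℕ) ∈ Finset.HasAntidiagonal.antidiagonal i from
        Finset.HasAntidiagonal.mem_antidiagonal.mpr (add_zero i))
  have hright : ∀ (b : A) (j : ℕ), ‖T 0 b j‖ ≤ η j b := by
    intro b j
    exact Finset.single_le_sum (f := fun p : ℕ × ℕ => ‖T p.1 b p.2‖)
      (fun _ _ => norm_nonneg _)
      (show ((0, j) : ℕ × ℕ) ∈ Finset.HasAntidiagonal.antidiagonal j from
        Finset.HasAntidiagonal.mem_antidiagonal.mpr (zero_add j))
  have part1 : ∀ a ∈ K, ∀ b ∈ K, ∀ k : ℕ,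
      η k (a * b) ≤ ∑ p ∈ Finset.HasAntidiagonal.antidiagonal k, η p.1 a * η p.2 b := by
    intro a ha b hb k
    refine Finset.sum_le_sum fun p _ => ?_
    calc ‖T p.1 (a * b) p.2‖ = ‖T p.1 a 0 * T 0 b p.2‖ := by rw [hTmul a ha b hb]
      _ ≤ ‖T p.1 a 0‖ * ‖T 0 b p.2‖ := norm_mul_le _ _
      _ ≤ η p.1 a * η p.2 b :=
        mul_le_mul (hleft a p.1) (hright b p.2) (norm_nonneg _) (hηnn _ _)
  refine ⟨part1, ?_⟩
  intro a ha b hb k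
  have step1 : ∑ j ∈ Finset.range (k + 1), η j (a * b) ≤
      ∑ j ∈ Finset.range (k + 1), ∑ p ∈ Finset.HasAntidiagonal.antidiagonal j, η p.1 a * η p.2 b :=
    Finset.sum_le_sum fun j _ => part1 a ha b hb j
  refine step1.trans ?_
  rw [Finset.sum_mul_sum, ← Finset.sum_product']
  rw [← Finset.sum_biUnion (by
    intro x _ y _ hxy
    simp only [Finset.disjoint_left, Finset.HasAntidiagonal.mem_antidiagonal]
    intro p hp hq
    exact hxy (hp ▸ hq))]
  refine Finset.sum_le_sum_of_subset_of_nonneg ?_ fun p _ _ =>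
    mul_nonneg (hηnn _ _) (hηnn _ _)
  intro p hp
  simp only [Finset.mem_biUnion, Finset.HasAntidiagonal.mem_antidiagonal, Finset.mem_range] at hp
  obtain ⟨j, hj, hpj⟩ := hp
  simp only [Finset.mem_product, Finset.mem_range]
  omega
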